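/- Let G = (V,E) be a directed mixed graph and α, β ∈ V. If there is no inducing path from α to β in G, then β is μ-separated from α given D(α,β) in G, where D(α,β) = {γ ∈ An({α,β}) : γ is directedly collider-connected to β} ∖ {α}. -/

import Mathlib

/-!
Directed mixed graphs (DMGs) with μ-separation, following
Mogensen & Hansen, "Markov equivalence of marginalized local independence graphs".
-/

universe u

/-- A directed mixed graph on node set `V`: a set of directed edges (`dir a b`
meaning `a → b`) and a set of bidirected edges (`bi`, a symmetric relation since
bidirected edges are unordered pairs).  Loops are allowed. -/
structure DMG (V : Type u) where
  dir : V → V → Prop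
  bi : V → V → Prop
  bi_symm : ∀ a b, bi a b → bi b a

namespace DMG

variable {V : Type u}

/-- A single step of a walk: an edge instance together with the direction in
which it is traversed (this records, in particular, orientations of loops).
A directed edge has a tail at its source and a head at its target; a bidirected
edge has heads at both endpoints. -/
inductive Step (G : DMG V) : V → V → Type u
  | dirF : ∀ {a b : V}, G.dir a b → Step G a b
  | dirB : ∀ {a b : V}, G.dir b a → Step G a b
  | bid  : ∀ {a b : V}, G.bi a b → Step G a b

/-- Whether the step has a head (edge mark) at its start node. -/
def Step.headStart {G : DMG V} : ∀ {a b : V}, Step G a b → Bool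
  | _, _, .dirF _ => false
  | _, _, .dirB _ => true
  | _, _, .bid _ => true

/-- Whether the step has a head (edge mark) at its end node. -/
def Step.headEnd {G : DMG V} : ∀ {a b : V}, Step G a b → Bool
  | _, _, .dirF _ => true
  | _, _, .dirB _ => false
  | _, _, .bid _ => true

/-- The step traverses a bidirected edge. -/
def Step.IsBid {G : DMG V} {a b : V} : Step G a b → Prop
  | .bid _ => True
  | _ => False

/-- The step traverses a directed edge, forwards. -/
def Step.IsDirF {G : DMG V} {a b : V} : Step G a b → Prop
  | .dirF _ => True
  | _ => False

/-- The underlying edge of a step: a directed edge is the ordered pair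
(tail, head); a bidirected edge is the unordered pair of its endpoints. -/
def Step.edge {G : DMG V} : ∀ {a b : V}, Step G a b → (V × V) ⊕ (Sym2 V)
  | a, b, .dirF _ => Sum.inl (a, b)
  | a, b, .dirB _ => Sum.inl (b, a)
  | a, b, .bid _ => Sum.inr s(a, b)

/-- A walk in a DMG: an alternating sequence of nodes and edges, each edge
between its neighbouring nodes, with a chosen orientation of each edge
(in particular of each directed loop). -/
inductive Walk (G : DMG V) : V → V → Type u
  | nil (a : V) : Walk G a a
  | cons {a b c : V} (s : Step G a b) (w : Walk G b c) : Walk G a c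

namespace Walk

variable {G : DMG V}

/-- A nontrivial walk contains at least one edge. -/
def Nontrivial : ∀ {a b : V}, Walk G a b → Prop
  | _, _, .nil _ => False
  | _, _, .cons _ _ => True

/-- The list of nodes of a walk, in order (with multiplicity). -/
def nodes : ∀ {a b : V}, Walk G a b → List V
  | a, _, .nil _ => [a]
  | a, _, .cons _ w => a :: w.nodes

/-- The non-endpoint (internal) nodes of a walk, in order (with multiplicity). -/
def interior {a b : V} (w : Walk G a b) : List V :=
  (w.nodes.dropLast).drop 1

/-- The list of edges of a walk. -/
def edges : ∀ {a b : V}, Walk G a b → List ((V × V) ⊕ (Sym2 V))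
  | _, _, .nil _ => []
  | _, _, .cons s w => s.edge :: w.edges

/-- Whether the first edge of the walk has a head at the first node
(`false` for a trivial walk). -/
def firstHead : ∀ {a b : V}, Walk G a b → Bool
  | _, _, .nil _ => false
  | _, _, .cons s _ => s.headStart

/-- Whether the last edge of the walk has a head at the last node
(`false` for a trivial walk). -/
def lastHead : ∀ {a b : V}, Walk G a b → Bool
  | _, _, .nil _ => false
  | _, _, .cons s (.nil _) => s.headEnd
  | _, _, .cons _ (.cons t w) => lastHead (Walk.cons t w)

/-- Helper: conditions at all remaining internal node instances of a walk,
where `h` records whether the edge arriving at the current start node has a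
head there.  A node instance is a collider if both adjoining edges have a
head at it; a collider must lie in `Anc`, a noncollider must avoid `C`. -/
def openFrom (C Anc : Set V) : ∀ {a b : V}, Bool → Walk G a b → Prop
  | _, _, _, .nil _ => True
  | a, _, h, .cons s w =>
      (if h && s.headStart then a ∈ Anc else a ∉ C) ∧ openFrom C Anc s.headEnd w

/-- Helper: every remaining internal node instance which is a collider lies in `S`. -/
def collInFrom (S : Set V) : ∀ {a b : V}, Bool → Walk G a b → Prop
  | _, _, _, .nil _ => True
  | a, _, h, .cons s w =>
      ((h && s.headStart) = true → a ∈ S) ∧ collInFrom S s.headEnd w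

/-- Every collider (internal node instance with heads on both sides) of the
walk lies in `S`. -/
def CollidersIn (S : Set V) : ∀ {a b : V}, Walk G a b → Prop
  | _, _, .nil _ => True
  | _, _, .cons s w => collInFrom S s.headEnd w

/-- The walk has no colliders. -/
def NoColliders {a b : V} (w : Walk G a b) : Prop :=
  w.CollidersIn ∅

/-- Helper: every remaining internal node instance is a collider. -/
def allCollFrom : ∀ {a b : V}, Bool → Walk G a b → Prop
  | _, _, _, .nil _ => True
  | _, _, h, .cons s w => (h && s.headStart) = true ∧ allCollFrom s.headEnd w

/-- Every internal node instance of the walk is a collider (no noncolliders). -/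
def AllColliders : ∀ {a b : V}, Walk G a b → Prop
  | _, _, .nil _ => True
  | _, _, .cons s w => allCollFrom s.headEnd w

/-- Every edge of the walk is bidirected. -/
def AllBid : ∀ {a b : V}, Walk G a b → Prop
  | _, _, .nil _ => True
  | _, _, .cons s w => s.IsBid ∧ w.AllBid

/-- The walk consists of a directed first edge (pointing forwards) followed by
bidirected edges only (the form `α → β` or `α → γ₁ ↔ ⋯ ↔ γₙ ↔ β`). -/
def UniForm : ∀ {a b : V}, Walk G a b → Prop
  | _, _, .nil _ => False
  | _, _, .cons s w => s.IsDirF ∧ w.AllBid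

end Walk

/-- `a` is an ancestor of `b`: there is a (possibly trivial) directed path
from `a` to `b`. -/
def anc (G : DMG V) (a b : V) : Prop := Relation.ReflTransGen G.dir a b

/-- The set of ancestors of nodes of `C`. -/
def anSet (G : DMG V) (C : Set V) : Set V := {a | ∃ c ∈ C, G.anc a c}

/-- The walk is μ-connecting given `C`: it is nontrivial, its first node is not
in `C`, every collider lies in `An(C)`, no noncollider lies in `C`, and its
final edge has a head at the final node. -/
def Walk.MuConn {G : DMG V} (C : Set V) : ∀ {a b : V}, Walk G a b → Prop
  | _, _, .nil _ => False
  | a, _, .cons s w =>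
      a ∉ C ∧ Walk.openFrom C (G.anSet C) s.headEnd w ∧ (Walk.cons s w).lastHead = true

/-- `B` is μ-separated from `A` given `C` in `G`: there is no μ-connecting
walk from any node of `A` to any node of `B` given `C`. -/
def muSep (G : DMG V) (A B C : Set V) : Prop :=
  ∀ ⦃a b : V⦄, a ∈ A → b ∈ B → ∀ w : Walk G a b, ¬ w.MuConn C

/-- Two DMGs on the same node set are Markov equivalent: they induce the same
independence model via μ-separation, i.e. `I(G₁) = I(G₂)`. -/
def MarkovEq (G₁ G₂ : DMG V) : Prop :=
  ∀ A B C : Set V, muSep G₁ A B C ↔ muSep G₂ A B C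

/-- `b` is separable from `a` in `I(G)`: there is `C ⊆ V ∖ {a}` with
`⟨{a},{b} | C⟩ ∈ I(G)`. -/
def separable (G : DMG V) (a b : V) : Prop :=
  ∃ C : Set V, a ∉ C ∧ muSep G {a} {b} C

/-- `a ∈ u(b, I(G))`: `b` is inseparable from `a` in `I(G)`. -/
def inU (G : DMG V) (a b : V) : Prop := ¬ G.separable a b

/-- `G₁` is a subgraph of `G₂` (same node set, edge-set inclusion). -/
def Sub (G₁ G₂ : DMG V) : Prop :=
  (∀ a b, G₁.dir a b → G₂.dir a b) ∧ (∀ a b, G₁.bi a b → G₂.bi a b)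

/-- The DMG obtained by adding the directed edge `a → b`. -/
def addDir (G : DMG V) (a b : V) : DMG V where
  dir x y := G.dir x y ∨ (x = a ∧ y = b)
  bi := G.bi
  bi_symm := G.bi_symm

/-- The DMG obtained by adding the bidirected edge `a ↔ b`. -/
def addBi (G : DMG V) (a b : V) : DMG V where
  dir := G.dir
  bi x y := G.bi x y ∨ (x = a ∧ y = b) ∨ (x = b ∧ y = a)
  bi_symm x y h := by
    rcases h with h | h | h
    · exact Or.inl (G.bi_symm _ _ h)
    · exact Or.inr (Or.inr ⟨h.2, h.1⟩)
    · exact Or.inr (Or.inl ⟨h.2, h.1⟩)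

/-- The DMG obtained by removing the directed edge `a → b`. -/
def removeDir (G : DMG V) (a b : V) : DMG V where
  dir x y := G.dir x y ∧ ¬(x = a ∧ y = b)
  bi := G.bi
  bi_symm := G.bi_symm

/-- The DMG obtained by removing the bidirected edge `a ↔ b`. -/
def removeBi (G : DMG V) (a b : V) : DMG V where
  dir := G.dir
  bi x y := G.bi x y ∧ ¬((x = a ∧ y = b) ∨ (x = b ∧ y = a))
  bi_symm x y h := ⟨G.bi_symm _ _ h.1, fun hc => h.2 (by tauto)⟩

/-- The complete DMG: all directed and all bidirected edges present. -/
def IsComplete (G : DMG V) : Prop :=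
  (∀ a b, G.dir a b) ∧ (∀ a b, G.bi a b)

/-- A DMG is maximal if it is complete, or adding any (absent) edge changes the
induced independence model. -/
def IsMaximal (G : DMG V) : Prop :=
  G.IsComplete ∨
    ∀ a b : V, (¬ G.dir a b → ¬ MarkovEq (G.addDir a b) G) ∧
      (¬ G.bi a b → ¬ MarkovEq (G.addBi a b) G)

end DMG
namespace DMG

variable {V : Type u}

/-- An inducing path from `a` to `b`: a nontrivial path or cycle from `a` to
`b` with a head at `b`, with no noncolliders, and on which every node is an
ancestor of `a` or of `b`. -/
def IsInducingPath (G : DMG V) {a b : V} (w : Walk G a b) : Prop :=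
  w.Nontrivial ∧
  (w.nodes.Nodup ∨ (a = b ∧ w.nodes.dropLast.Nodup)) ∧
  w.lastHead = true ∧
  w.AllColliders ∧
  ∀ x ∈ w.nodes, G.anc x a ∨ G.anc x b

/-- A bidirected inducing path: an inducing path all of whose edges are bidirected. -/
def IsBidirectedIP (G : DMG V) {a b : V} (w : Walk G a b) : Prop :=
  G.IsInducingPath w ∧ w.AllBid

/-- A directed inducing path: an inducing path of the form `α → β` or
`α → γ₁ ↔ ⋯ ↔ γₙ ↔ β` with every `γᵢ` an ancestor of `β`. -/
def IsDirectedIP (G : DMG V) {a b : V} (w : Walk G a b) : Prop :=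
  G.IsInducingPath w ∧ w.UniForm ∧ ∀ x ∈ w.interior, G.anc x b

/-- There exists a nontrivial walk in `G` between `x` and `y` with no
colliders, all non-endpoint nodes in `M`, and with edge marks `hs` at `x`
(`true` = head) and `he` at `y`. -/
def ConnThrough (G : DMG V) (M : Set V) (x y : V) (hs he : Bool) : Prop :=
  ∃ w : Walk G x y, w.Nontrivial ∧ w.NoColliders ∧
    (∀ z ∈ w.interior, z ∈ M) ∧ w.firstHead = hs ∧ w.lastHead = he

/-- The latent projection `m(G, O)` of `G` on `O`: the DMG on node set `O`
having an edge (with given endpoint marks) between `α` and `β` if and only if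
`G` contains a nontrivial endpoint-identical walk between `α` and `β` with no
colliders and all non-endpoint nodes in `M = V ∖ O`. -/
def latentProj (G : DMG V) (O : Set V) : DMG {x : V // x ∈ O} where
  dir x y := ConnThrough G Oᶜ x.1 y.1 false true
  bi x y := ConnThrough G Oᶜ x.1 y.1 true true ∨ ConnThrough G Oᶜ y.1 x.1 true true
  bi_symm x y h := h.symm

/-- `x` is directedly collider-connected to `b`: there is a nontrivial walk
from `x` to `b` with a head at `b` on which every non-endpoint node is a
collider. -/
def dirCollConn (G : DMG V) (x b : V) : Prop :=
  ∃ w : Walk G x b, w.Nontrivial ∧ w.AllColliders ∧ w.lastHead = true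

/-- The set `D(a,b)` of nodes in `An({a,b})` directedly collider-connected to
`b`, except `a`. -/
def Dset (G : DMG V) (a b : V) : Set V :=
  {x | x ∈ G.anSet {a, b} ∧ G.dirCollConn x b} \ {a}

/-- `a` and `b` are potential siblings in the independence model `I(G)`. -/
def PotSib (G : DMG V) (a b : V) : Prop :=
  (G.inU b a ∧ G.inU a b) ∧
  (∀ (γ : V) (C : Set V), b ∈ C → muSep G {γ} {a} C → muSep G {γ} {b} C) ∧
  (∀ (γ : V) (C : Set V), a ∈ C → muSep G {γ} {b} C → muSep G {γ} {a} C)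

/-- `a` is a potential parent of `b` in the independence model `I(G)`. -/
def PotPar (G : DMG V) (a b : V) : Prop :=
  G.inU a b ∧
  (∀ (γ : V) (C : Set V), a ∉ C → muSep G {γ} {b} C → muSep G {γ} {a} C) ∧
  (∀ (γ δ : V) (C : Set V), a ∉ C → b ∈ C →
    muSep G {γ} {δ} C → muSep G {γ} {b} C ∨ muSep G {a} {δ} C) ∧
  (∀ (γ : V) (C : Set V), a ∉ C → muSep G {b} {γ} C → muSep G {b} {γ} (C ∪ {a}))

/-- The graph `N(I(G))`: directed edge `a → b` present iff `a` is a potential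
parent of `b` in `I(G)`, bidirected edge `a ↔ b` present iff `a` and `b` are
potential siblings in `I(G)` (potential siblinghood is symmetric). -/
def NGraph (G : DMG V) : DMG V where
  dir a b := G.PotPar a b
  bi a b := G.PotSib a b ∨ G.PotSib b a
  bi_symm _ _ h := h.symm

/-- A path is m-connecting given `C` if it is a path (no repeated nodes), no
noncollider on it is in `C` and every collider on it is in `An(C)`. -/
def Walk.MConn {G : DMG V} (C : Set V) : ∀ {a b : V}, Walk G a b → Prop
  | _, _, .nil _ => True
  | _, _, .cons s w =>
      (Walk.cons s w).nodes.Nodup ∧ Walk.openFrom C (G.anSet C) s.headEnd w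

/-- `A` and `B` are m-separated by `C`: there is no m-connecting path between
a node of `A` and a node of `B` given `C`. -/
def mSep (G : DMG V) (A B C : Set V) : Prop :=
  ∀ ⦃a b : V⦄, a ∈ A → b ∈ B →
    (∀ w : Walk G a b, ¬ w.MConn C) ∧ (∀ w : Walk G b a, ¬ w.MConn C)

/-- Auxiliary directed-edge relation of the `B`-history version of `G`. -/
def histDir (G : DMG V) (B : Set V) : (V ⊕ {x : V // x ∈ B}) → (V ⊕ {x : V // x ∈ B}) → Prop
  | .inl u, .inl v => G.dir u v
  | .inl u, .inr v => G.dir u v.1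
  | _, _ => False

/-- Auxiliary bidirected-edge relation of the `B`-history version of `G`. -/
def histBi (G : DMG V) (B : Set V) : (V ⊕ {x : V // x ∈ B}) → (V ⊕ {x : V // x ∈ B}) → Prop
  | .inl u, .inl v => G.bi u v
  | .inl u, .inr v => G.bi u v.1
  | .inr u, .inl v => G.bi u.1 v
  | .inr _, .inr _ => False

/-- The `B`-history version `G(B)` of `G`: node set `V ⊔ Bᵖ`, whose subgraph
on `V` is `G`, with additionally `α ↔ βᵖ` whenever `α ↔ β` in `G` and
`α → βᵖ` whenever `α → β` in `G` (for `α ∈ V`, `β ∈ B`). -/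
def hist (G : DMG V) (B : Set V) : DMG (V ⊕ {x : V // x ∈ B}) where
  dir := G.histDir B
  bi := G.histBi B
  bi_symm x y h := by
    cases x <;> cases y <;>
      simp only [histBi] at h ⊢ <;>
      first
        | exact G.bi_symm _ _ h
        | exact h

end DMG

namespace DMG
namespace Walk

variable {V : Type u} {G : DMG V}

/-- Number of edges of a walk. -/
def len : ∀ {a b : V}, Walk G a b → ℕ
  | _, _, .nil _ => 0
  | _, _, .cons _ w => w.len + 1

lemma nodes_ne_nil : ∀ {a b : V} (w : Walk G a b), w.nodes ≠ []
  | _, _, .nil _ => by simp [nodes]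
  | _, _, .cons _ _ => by simp [nodes]

lemma nodes_getLast : ∀ {a b : V} (w : Walk G a b) (h : w.nodes ≠ []), w.nodes.getLast h = b
  | _, _, .nil _, _ => rfl
  | _, _, .cons s w, _ => by
      simp only [nodes, List.getLast_cons (nodes_ne_nil w)]
      exact nodes_getLast w _

lemma dropLast_nodes_cons {a b c : V} (s : Step G a b) (w : Walk G b c) :
    (Walk.cons s w).nodes.dropLast = a :: w.nodes.dropLast := by
  cases w <;> simp [nodes]

lemma nontrivial_cons {a b c : V} (s : Step G a b) (w : Walk G b c) :
    (Walk.cons s w).Nontrivial := trivial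

lemma lastHead_cons_nontrivial {a b c : V} (s : Step G a b) (w : Walk G b c)
    (hw : w.Nontrivial) : (Walk.cons s w).lastHead = w.lastHead := by
  cases w with
  | nil => exact absurd hw (by simp [Nontrivial])
  | cons t w' => rfl

lemma nontrivial_of_dropLast {x y : V} (w : Walk G x y) {γ : V}
    (h : γ ∈ w.nodes.dropLast) : w.Nontrivial := by
  cases w with
  | nil => simp [nodes] at h
  | cons s w' => exact trivial

end Walk
end DMG
namespace DMG
namespace Walk

variable {V : Type u} {G : DMG V}

lemma openFrom_collInFrom (C A T : Set V) (hAT : A ⊆ T) :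
    ∀ {x y : V} (w : Walk G x y) (h : Bool), openFrom C A h w → collInFrom T h w
  | _, _, .nil _, _, _ => trivial
  | x, _, .cons t w', h, ho => by
      refine ⟨fun hcol => ?_, openFrom_collInFrom C A T hAT w' t.headEnd ho.2⟩
      have h1 := ho.1
      rw [hcol] at h1
      simp only [if_true, if_pos] at h1
      exact hAT h1

lemma tailAnc (T : Set V) (hT : ∀ p q : V, G.dir p q → q ∈ T → p ∈ T) :
    ∀ {x m y : V} (s : Step G x m) (w : Walk G m y),
      s.headStart = false → collInFrom T s.headEnd w → y ∈ T → x ∈ T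
  | x, m, y, s, w, hs, hc, hy => by
    cases s with
    | dirF e =>
      cases w with
      | nil => exact hT _ _ e hy
      | cons t w' =>
        cases ht : t.headStart with
        | true => exact hT _ _ e (hc.1 (by simp [Step.headEnd, ht]))
        | false => exact hT _ _ e (tailAnc T hT t w' ht hc.2 hy)
    | dirB e => simp [Step.headStart] at hs
    | bid e => simp [Step.headStart] at hs

lemma allInT (T : Set V) (hT : ∀ p q : V, G.dir p q → q ∈ T → p ∈ T) :
    ∀ {x y : V} (w : Walk G x y) (h : Bool),
      collInFrom T h w → (h = false → x ∈ T) → y ∈ T → ∀ z ∈ w.nodes, z ∈ T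
  | x, _, .nil _, h, hc, hx, hy, z, hz => by
      simp [nodes] at hz; subst hz; exact hy
  | x, _, .cons t w', h, hc, hx, hy, z, hz => by
      have hxT : x ∈ T := by
        cases hh : h with
        | false => exact hx hh
        | true =>
          cases hts : t.headStart with
          | true => exact hc.1 (by simp [hh, hts])
          | false => exact tailAnc T hT t w' hts hc.2 hy
      rcases List.mem_cons.mp (by simpa [nodes] using hz) with rfl | hz'
      · exact hxT
      · refine allInT T hT w' t.headEnd hc.2 (fun hte => ?_) hy z hz'
        cases t with
        | dirF e => simp [Step.headEnd] at hte
        | dirB e => exact hT _ _ e hxT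
        | bid e => simp [Step.headEnd] at hte

end Walk
end DMG
namespace DMG
namespace Walk

variable {V : Type u} {G : DMG V}

/-- Last-noncollider suffix extraction. -/
lemma lemE (C A : Set V) :
    ∀ {x y : V} (w : Walk G x y) (h : Bool),
      openFrom C A h w → ¬ allCollFrom h w →
      ∃ (γ m' : V) (s' : Step G γ m') (w'' : Walk G m' y),
        γ ∈ w.nodes ∧ γ ∉ C ∧ openFrom C A s'.headEnd w'' ∧ allCollFrom s'.headEnd w'' ∧
        (Walk.cons s' w'').lastHead = w.lastHead ∧ (Walk.cons s' w'').len ≤ w.len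
  | _, _, .nil _, _, _, hn => absurd trivial hn
  | x, _, .cons t w', h, ho, hn => by
      by_cases hin : allCollFrom t.headEnd w'
      · have hf : (h && t.headStart) = false := by
          by_contra hcon
          exact hn ⟨by simpa using hcon, hin⟩
        have h1 := ho.1
        rw [hf] at h1
        simp only [Bool.false_eq_true, if_false] at h1
        exact ⟨x, _, t, w', by simp [nodes], h1, ho.2, hin, rfl, le_refl _⟩
      · obtain ⟨γ, m', s', w'', hmem, hC, hop, hall, hlast, hlen⟩ :=
          lemE C A w' t.headEnd ho.2 hin
        have hw' : w'.Nontrivial := by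
          cases w' with
          | nil => exact absurd trivial hin
          | cons _ _ => exact trivial
        refine ⟨γ, m', s', w'', ?_, hC, hop, hall,
          hlast.trans (lastHead_cons_nontrivial t w' hw').symm, hlen.trans (Nat.le_succ _)⟩
        simp only [nodes, List.mem_cons]
        exact Or.inr hmem

/-- Suffix extraction from an internal occurrence of `γ` on an all-collider walk. -/
lemma lemG (C A : Set V) :
    ∀ {x y : V} (w : Walk G x y) (h : Bool),
      openFrom C A h w → allCollFrom h w → ∀ γ, γ ∈ w.nodes.dropLast →
      ∃ (m' : V) (s' : Step G γ m') (w'' : Walk G m' y),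
        s'.headStart = true ∧ openFrom C A s'.headEnd w'' ∧ allCollFrom s'.headEnd w'' ∧
        (Walk.cons s' w'').lastHead = w.lastHead ∧ (Walk.cons s' w'').len ≤ w.len
  | _, _, .nil _, _, _, _, γ, hγ => by simp [nodes] at hγ
  | x, _, .cons t w', h, ho, hall, γ, hγ => by
      rw [dropLast_nodes_cons] at hγ
      rcases List.mem_cons.mp hγ with rfl | hγ'
      · exact ⟨_, t, w', (Bool.and_eq_true _ _ |>.mp hall.1).2, ho.2, hall.2, rfl, le_refl _⟩
      · obtain ⟨m', s', w'', hst, hop, hal, hlast, hlen⟩ :=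
          lemG C A w' t.headEnd ho.2 hall.2 γ hγ'
        have hw' : w'.Nontrivial := nontrivial_of_dropLast w' hγ'
        exact ⟨m', s', w'', hst, hop, hal,
          hlast.trans (lastHead_cons_nontrivial t w' hw').symm, hlen.trans (Nat.le_succ _)⟩

/-- Prefix extraction up to an internal occurrence of `γ` on an all-collider walk. -/
lemma lemH (C A : Set V) :
    ∀ {x y : V} (w : Walk G x y) (h : Bool),
      openFrom C A h w → allCollFrom h w → ∀ γ, γ ∈ w.nodes.dropLast → γ ≠ x →
      ∃ w₀ : Walk G x γ, w₀.Nontrivial ∧ openFrom C A h w₀ ∧ w₀.lastHead = true ∧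
        w₀.len < w.len
  | _, _, .nil _, _, _, _, γ, hγ, _ => by simp [nodes] at hγ
  | x, _, @Walk.cons _ _ _ m _ t w', h, ho, hall, γ, hγ, hγx => by
      rw [dropLast_nodes_cons] at hγ
      rcases List.mem_cons.mp hγ with rfl | hγ'
      · exact absurd rfl hγx
      · by_cases hγm : γ = m
        · subst hγm
          cases w' with
          | nil => simp [nodes] at hγ'
          | cons u w'' =>
            have hte : t.headEnd = true := (Bool.and_eq_true _ _ |>.mp hall.2.1).1
            exact ⟨Walk.cons t (Walk.nil γ), trivial, ⟨ho.1, trivial⟩, hte,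
              Nat.succ_lt_succ (Nat.succ_pos _)⟩
        · obtain ⟨w₀, hnt, hop, hlast, hlen⟩ :=
            lemH C A w' t.headEnd ho.2 hall.2 γ hγ' hγm
          refine ⟨Walk.cons t w₀, trivial, ⟨ho.1, hop⟩, ?_, ?_⟩
          · exact (lastHead_cons_nontrivial t w₀ hnt).trans hlast
          · show w₀.len + 1 < w'.len + 1
            omega

/-- Splicing out a duplicated internal node on an all-collider walk. -/
lemma lemS (C A : Set V) :
    ∀ {x y : V} (w : Walk G x y) (h : Bool),
      openFrom C A h w → allCollFrom h w → ∀ γ, List.Duplicate γ w.nodes.dropLast →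
      ∃ w₀ : Walk G x y, w₀.Nontrivial ∧ openFrom C A h w₀ ∧ w₀.lastHead = w.lastHead ∧
        w₀.len < w.len
  | _, _, .nil _, _, _, _, γ, hγ => by
      have := hγ.mem
      simp [nodes] at this
  | x, _, .cons t w', h, ho, hall, γ, hγ => by
      rw [dropLast_nodes_cons] at hγ
      rcases List.duplicate_cons_iff.mp hγ with ⟨rfl, hmem⟩ | hdup
      · obtain ⟨m', s', w'', hst, hop, hal, hlast, hlen⟩ :=
          lemG C A w' t.headEnd ho.2 hall.2 x hmem
        have hh : h = true := (Bool.and_eq_true _ _ |>.mp hall.1).1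
        have hts : t.headStart = true := (Bool.and_eq_true _ _ |>.mp hall.1).2
        have hxA : x ∈ A := by
          have h1 := ho.1
          rw [hh, hts] at h1
          simpa using h1
        have hw' : w'.Nontrivial := nontrivial_of_dropLast w' hmem
        refine ⟨Walk.cons s' w'', trivial, ⟨?_, hop⟩, ?_, ?_⟩
        · rw [hh, hst]; simpa using hxA
        · exact hlast.trans (lastHead_cons_nontrivial t w' hw').symm
        · exact lt_of_le_of_lt hlen (Nat.lt_succ_self _)
      · obtain ⟨w₀, hnt, hop, hlast, hlen⟩ := lemS C A w' t.headEnd ho.2 hall.2 γ hdup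
        have hw' : w'.Nontrivial := nontrivial_of_dropLast w' hdup.mem
        refine ⟨Walk.cons t w₀, trivial, ⟨ho.1, hop⟩, ?_, ?_⟩
        · exact (lastHead_cons_nontrivial t w₀ hnt).trans
            (hlast.trans (lastHead_cons_nontrivial t w' hw').symm)
        · show w₀.len + 1 < w'.len + 1
          omega


/-- Prefix construction when the final node occurs internally. -/
lemma lemHb (C A : Set V) {x m y : V} (s : Step G x m) (rest : Walk G m y)
    (ho : openFrom C A s.headEnd rest) (hall : allCollFrom s.headEnd rest)
    (hmem : y ∈ rest.nodes.dropLast) :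
    ∃ p : Walk G m y, openFrom C A s.headEnd p ∧ (Walk.cons s p).lastHead = true ∧
      (Walk.cons s p).len ≤ rest.len := by
  by_cases hym : y = m
  · subst hym
    cases rest with
    | nil => simp [nodes] at hmem
    | cons u w₂ =>
      have hse : s.headEnd = true := (Bool.and_eq_true _ _ |>.mp hall.1).1
      exact ⟨Walk.nil y, trivial, hse, Nat.succ_le_succ (Nat.zero_le _)⟩
  · obtain ⟨w₀, hnt, hop, hlast, hlen⟩ := lemH C A rest s.headEnd ho hall y hmem hym
    exact ⟨w₀, hop, (lastHead_cons_nontrivial s w₀ hnt).trans hlast, hlen⟩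

end Walk
end DMG
namespace DMG

variable {V : Type u}

open Walk in
lemma main_lemma (G : DMG V) (a b : V) :
    ∀ n (w : Walk G a b), w.len ≤ n → w.MuConn (G.Dset a b) →
      ∃ w' : Walk G a b, G.IsInducingPath w' := by
  classical
  set C := G.Dset a b with hCdef
  set A := G.anSet C with hAdef
  set T := G.anSet {a, b} with hTdef
  have hTcl : ∀ p q : V, G.dir p q → q ∈ T → p ∈ T := by
    rintro p q e ⟨c, hc, hanc⟩
    exact ⟨c, hc, Relation.ReflTransGen.head e hanc⟩
  have hAT : A ⊆ T := by
    rintro z ⟨c, hc, hz⟩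
    obtain ⟨e, he, hce⟩ := hc.1.1
    exact ⟨e, he, hz.trans hce⟩
  have haT : a ∈ T := ⟨a, Set.mem_insert a _, Relation.ReflTransGen.refl⟩
  have hbT : b ∈ T := ⟨b, Set.mem_insert_iff.mpr (Or.inr rfl), Relation.ReflTransGen.refl⟩
  have hTanc : ∀ z ∈ T, G.anc z a ∨ G.anc z b := by
    rintro z ⟨c, hc, hzc⟩
    rcases Set.mem_insert_iff.mp hc with rfl | hc'
    · exact Or.inl hzc
    · rw [Set.mem_singleton_iff.mp hc'] at hzc
      exact Or.inr hzc
  intro n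
  induction n with
  | zero =>
    intro w hlen hw
    cases w with
    | nil => exact absurd hw (by simp [Walk.MuConn])
    | cons s rest => exact absurd hlen (by simp [Walk.len])
  | succ n ih =>
    intro w hlen hw
    cases w with
    | nil => exact absurd hw (by simp [Walk.MuConn])
    | cons s rest =>
      obtain ⟨hC, hOpen, hLast⟩ := hw
      cases rest with
      | nil =>
        refine ⟨Walk.cons s (Walk.nil b), trivial, ?_, hLast, trivial, ?_⟩
        · by_cases hab : a = b
          · exact Or.inr ⟨hab, by simp [nodes]⟩
          · exact Or.inl (by simp [nodes, hab])
        · intro z hz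
          simp [nodes] at hz
          rcases hz with rfl | rfl
          · exact Or.inl Relation.ReflTransGen.refl
          · exact Or.inr Relation.ReflTransGen.refl
      | cons u w₂ =>
        set rest := Walk.cons u w₂ with hrest
        have hrlen : rest.len ≤ n := by
          simpa [Walk.len] using hlen
        have hLast' : rest.lastHead = true := hLast
        have hnodesT : ∀ z ∈ rest.nodes, z ∈ T := by
          refine allInT T hTcl rest s.headEnd
            (openFrom_collInFrom C A T hAT rest s.headEnd hOpen) (fun hse => ?_) hbT
          cases s with
          | dirF e => simp [Step.headEnd] at hse
          | dirB e => exact hTcl _ _ e haT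
          | bid e => simp [Step.headEnd] at hse
        by_cases hAC : Walk.allCollFrom s.headEnd rest
        · -- all internal nodes are colliders
          by_cases hND : (Walk.cons s rest).nodes.Nodup ∨
              (a = b ∧ (Walk.cons s rest).nodes.dropLast.Nodup)
          · refine ⟨Walk.cons s rest, trivial, hND, hLast, hAC, ?_⟩
            intro z hz
            rcases List.mem_cons.mp (show z ∈ a :: rest.nodes from hz) with rfl | hz'
            · exact Or.inl Relation.ReflTransGen.refl
            · exact hTanc z (hnodesT z hz')
          · -- some repetition: build a strictly shorter μ-connecting walk
            push_neg at hND
            obtain ⟨hnd1, hnd2⟩ := hND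
            set L := rest.nodes.dropLast with hLdef
            have hLb : L ++ [b] = rest.nodes := by
              have := List.dropLast_append_getLast (nodes_ne_nil rest)
              rwa [nodes_getLast rest (nodes_ne_nil rest)] at this
            have key : a ∈ L ∨ (a ≠ b ∧ b ∈ L) ∨ (∃ γ, List.Duplicate γ L) := by
              by_cases hab : a = b
              · have h2 := hnd2 hab
                rw [dropLast_nodes_cons] at h2
                rw [List.nodup_cons] at h2
                push_neg at h2
                by_cases haL : a ∈ L
                · exact Or.inl haL
                · exact Or.inr (Or.inr (List.exists_duplicate_iff_not_nodup.mpr (h2 haL)))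
              · have h1 : ¬ (a :: rest.nodes).Nodup := by simpa [nodes] using hnd1
                rw [List.nodup_cons] at h1
                push_neg at h1
                by_cases har : a ∈ rest.nodes
                · rw [← hLb] at har
                  rcases List.mem_append.mp har with haL | hab'
                  · exact Or.inl haL
                  · exact absurd (List.mem_singleton.mp hab') hab
                · obtain ⟨γ, hγ⟩ := List.exists_duplicate_iff_not_nodup.mpr (h1 har)
                  rw [← hLb] at hγ
                  have hcount := List.duplicate_iff_two_le_count.mp hγ
                  rw [List.count_append] at hcount
                  by_cases hγb : γ = b
                  · have h1b : List.count γ [b] = 1 := by simp [hγb]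
                    have : 1 ≤ List.count γ L := by omega
                    exact Or.inr (Or.inl ⟨hab, hγb ▸ List.count_pos_iff.mp this⟩)
                  · have : 2 ≤ List.count γ L := by
                      have : List.count γ [b] = 0 := List.count_eq_zero.mpr (by simpa using hγb)
                      omega
                    exact Or.inr (Or.inr ⟨γ, List.duplicate_iff_two_le_count.mpr this⟩)
            rcases key with haL | ⟨hab, hbL⟩ | ⟨γ, hγ⟩
            · -- a occurs internally: take the suffix from there
              obtain ⟨m', s', w'', _, hop, _, hlast, hlen'⟩ :=
                lemG C A rest s.headEnd hOpen hAC a haL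
              exact ih (Walk.cons s' w'') (hlen'.trans hrlen)
                ⟨hC, hop, hlast.trans hLast'⟩
            · -- b occurs internally: take the prefix up to there
              obtain ⟨p, hop, hlast, hlen'⟩ := lemHb C A s rest hOpen hAC hbL
              exact ih (Walk.cons s p) (hlen'.trans hrlen) ⟨hC, hop, hlast⟩
            · -- an internal node repeats: splice
              obtain ⟨w₀, hnt, hop, hlast, hlen'⟩ := lemS C A rest s.headEnd hOpen hAC γ hγ
              refine ih (Walk.cons s w₀) ?_ ⟨hC, hop, ?_⟩
              · show w₀.len + 1 ≤ n
                exact Nat.succ_le_of_lt (lt_of_lt_of_le hlen' hrlen)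
              · exact (lastHead_cons_nontrivial s w₀ hnt).trans (hlast.trans hLast')
        · -- there is a noncollider: last-noncollider argument
          obtain ⟨γ, m', s', w'', hmem, hγC, hop, hall, hlast, hlen'⟩ :=
            lemE C A rest s.headEnd hOpen hAC
          by_cases hγa : γ = a
          · subst hγa
            exact ih (Walk.cons s' w'') (hlen'.trans hrlen) ⟨hC, hop, hlast.trans hLast'⟩
          · refine absurd (show γ ∈ C from ?_) hγC
            refine ⟨⟨hnodesT γ hmem, ⟨Walk.cons s' w'', trivial, hall, hlast.trans hLast'⟩⟩, ?_⟩
            simpa using hγa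

end DMG


/-- Proposition 10: if there is no inducing path from `a`
to `b` in `G`, then `b` is μ-separated from `a` given
`D(a,b) = {γ ∈ An({a,b}) : γ directedly collider-connected to b} ∖ {a}`. -/
theorem stmt11 {V : Type u} [Fintype V] (G : DMG V) (a b : V)
    (h : ¬ ∃ w : DMG.Walk G a b, G.IsInducingPath w) :
    DMG.muSep G {a} {b} (G.Dset a b) := by
  intro x y hx hy w hw
  rw [Set.mem_singleton_iff] at hx hy
  subst hx; subst hy
  exact h (DMG.main_lemma G x y w.len w le_rfl hw)
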